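/- Let φ be a formula of BndSCL, 𝔄 a suitable model and s a suitable assignment. Then 𝔄,s ⊨_ω φ (φ is true in 𝔄 under s in bounded semantics) if and only if there exists n ∈ ℕ such that 𝔄,s ⊨ Φⁿ_φ in first-order logic; equivalently, φ is weakly equivalent to the countable disjunction ⋁_{n∈ℕ} Φⁿ_φ of its approximants. -/

import Mathlib

/-
Common formalization of the logics SCL (static computation logic, unbounded
game-theoretic semantics) and BndSCL (bounded semantics), following the paper
"First-order logic with self-reference".

* Games are played on arbitrary (possibly infinite) arenas; plays are maximal
  walks; strategies are functions from finite walks (histories) to positions;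
  infinite plays, and finite plays ending at a dead end where `win` holds for
  neither player, are won by nobody.
* The semantic games are formalized with positions carrying the current
  (sub)formula, an environment binding each label symbol to the labelled
  formula it most recently named (this is the standard closure rendering of
  "reference formula of a claim-symbol occurrence"), the current assignment
  and the polarity (+ = true, − = false).  The bounded game additionally
  carries a clock value.
-/

set_option autoImplicit false

universe u

/-! ## Generic two-player games on (possibly infinite) arenas -/

inductive Player : Type
  | eloise : Player
  | abelard : Player
deriving DecidableEq

def Player.opp : Player → Player
  | .eloise => .abelard
  | .abelard => .eloise

/-- A game arena: an ownership function (corresponding to the partition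
`V = V₀ ∪ V₁`), an edge relation, and a predicate telling which player (if
any) wins a play ending at a given dead-end position. -/
structure GameArena (P : Type u) where
  turn : P → Player
  edge : P → P → Prop
  win : P → Player → Prop

namespace GameArena

variable {P : Type u} (A : GameArena P)

def DeadEnd (u : P) : Prop := ∀ x, ¬ A.edge u x

/-- `w` is a finite nonempty walk whose first element is `v`. -/
def IsWalkFrom (v : P) (w : List P) : Prop :=
  w.head? = some v ∧ List.Chain' A.edge w

/-- A finite (maximal) play from `v`: a walk whose last element is a dead end. -/
def IsFinitePlay (v : P) (w : List P) : Prop :=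
  A.IsWalkFrom v w ∧ ∀ u, w.getLast? = some u → A.DeadEnd u

/-- An infinite play from `v`. -/
def IsInfPlay (v : P) (f : ℕ → P) : Prop :=
  f 0 = v ∧ ∀ n, A.edge (f n) (f (n + 1))

/-- A strategy (a function from histories to positions) of player `pl` is
legal if it always prescribes a move along an edge whenever a move exists. -/
def LegalFor (pl : Player) (v : P) (σ : List P → P) : Prop :=
  ∀ w u, A.IsWalkFrom v w → w.getLast? = some u → A.turn u = pl →
    (∃ x, A.edge u x) → A.edge u (σ w)

/-- The strategy `σ` of player `pl` is followed in the finite play `w`. -/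
def FollowsFin (pl : Player) (σ : List P → P) (w : List P) : Prop :=
  ∀ q u x, (q ++ [x]) <+: w → q.getLast? = some u → A.turn u = pl → x = σ q

/-- The strategy `σ` of player `pl` is followed in the infinite play `f`. -/
def FollowsInf (pl : Player) (σ : List P → P) (f : ℕ → P) : Prop :=
  ∀ n, A.turn (f n) = pl →
    f (n + 1) = σ (List.ofFn fun i : Fin (n + 1) => f i)

/-- `σ` is a winning strategy of player `pl` from `v`: it is legal, every
finite maximal play following it ends in a dead end won by `pl`, and no
infinite play follows it (infinite plays are won by neither player). -/
def WinningStrategy (pl : Player) (v : P) (σ : List P → P) : Prop :=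
  A.LegalFor pl v σ ∧
  (∀ w, A.IsFinitePlay v w → A.FollowsFin pl σ w →
      ∃ u, w.getLast? = some u ∧ A.win u pl) ∧
  (∀ f, A.IsInfPlay v f → ¬ A.FollowsInf pl σ f)

def HasWinningStrategy (pl : Player) (v : P) : Prop :=
  ∃ σ : List P → P, A.WinningStrategy pl v σ

end GameArena

/-- A positional strategy: its moves depend only on the current position. -/
def Positional {P : Type u} (σ : List P → P) : Prop :=
  ∀ q q' : List P, q.getLast? = q'.getLast? → σ q = σ q'

/-! ## Syntax of SCL / BndSCL -/

/-- A purely relational vocabulary. -/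
structure Vocab : Type 1 where
  Rel : Type
  arity : Rel → ℕ

/-- Formulas of SCL / BndSCL over the vocabulary `V`.  Variables and label
symbols are natural numbers; `claim L` is the claim symbol `C_L` and
`lab L φ` is the labelled formula `L φ`. -/
inductive SCLFormula (V : Vocab) : Type
  | bot : SCLFormula V
  | eq (x y : ℕ) : SCLFormula V
  | rel (R : V.Rel) (args : Fin (V.arity R) → ℕ) : SCLFormula V
  | claim (L : ℕ) : SCLFormula V
  | not (φ : SCLFormula V) : SCLFormula V
  | and (φ ψ : SCLFormula V) : SCLFormula V
  | or (φ ψ : SCLFormula V) : SCLFormula V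
  | ex (x : ℕ) (φ : SCLFormula V) : SCLFormula V
  | all (x : ℕ) (φ : SCLFormula V) : SCLFormula V
  | lab (L : ℕ) (φ : SCLFormula V) : SCLFormula V

namespace SCLFormula

variable {V : Vocab}

/-- First-order atoms. -/
def IsFOAtom : SCLFormula V → Prop
  | .bot => True
  | .eq _ _ => True
  | .rel _ _ => True
  | _ => False

/-- Purely first-order formulas (no claim symbols, no label symbols). -/
def IsFO : SCLFormula V → Prop
  | .bot => True
  | .eq _ _ => True
  | .rel _ _ => True
  | .claim _ => False
  | .not φ => IsFO φ
  | .and φ ψ => IsFO φ ∧ IsFO ψ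
  | .or φ ψ => IsFO φ ∧ IsFO ψ
  | .ex _ φ => IsFO φ
  | .all _ φ => IsFO φ
  | .lab _ _ => False

/-- Free (individual) variables. -/
def freeVars : SCLFormula V → Finset ℕ
  | .bot => ∅
  | .eq x y => {x, y}
  | .rel _ a => Finset.image a Finset.univ
  | .claim _ => ∅
  | .not φ => freeVars φ
  | .and φ ψ => freeVars φ ∪ freeVars ψ
  | .or φ ψ => freeVars φ ∪ freeVars ψ
  | .ex x φ => freeVars φ \ {x}
  | .all x φ => freeVars φ \ {x}
  | .lab _ φ => freeVars φ

/-- All variables occurring in a formula (free or bound). -/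
def vars : SCLFormula V → Finset ℕ
  | .bot => ∅
  | .eq x y => {x, y}
  | .rel _ a => Finset.image a Finset.univ
  | .claim _ => ∅
  | .not φ => vars φ
  | .and φ ψ => vars φ ∪ vars ψ
  | .or φ ψ => vars φ ∪ vars ψ
  | .ex x φ => insert x (vars φ)
  | .all x φ => insert x (vars φ)
  | .lab _ φ => vars φ

/-- Sentences: formulas with no free variables. -/
def IsSentence (φ : SCLFormula V) : Prop := freeVars φ = ∅

end SCLFormula

/-! ## Structures and first-order (Tarski) satisfaction -/

/-- A (suitable) model for vocabulary `V`: a nonempty domain together with an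
interpretation of all relation symbols. -/
structure Struct (V : Vocab) where
  Dom : Type u
  dom_nonempty : Nonempty Dom
  interp : ∀ R : V.Rel, (Fin (V.arity R) → Dom) → Prop

attribute [instance] Struct.dom_nonempty

/-- Satisfaction of atoms (false on non-atoms). -/
def atomSat {V : Vocab} (M : Struct.{u} V) (s : ℕ → M.Dom) : SCLFormula V → Prop
  | .bot => False
  | .eq x y => s x = s y
  | .rel R a => M.interp R fun i => s (a i)
  | _ => False

/-- Standard (Tarski) first-order satisfaction.  It is only meaningful on
purely first-order formulas; claim symbols are interpreted as `False` and
label symbols are ignored. -/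
def FOSat {V : Vocab} (M : Struct.{u} V) : (ℕ → M.Dom) → SCLFormula V → Prop
  | _, .bot => False
  | s, .eq x y => s x = s y
  | s, .rel R a => M.interp R fun i => s (a i)
  | _, .claim _ => False
  | s, .not φ => ¬ FOSat M s φ
  | s, .and φ ψ => FOSat M s φ ∧ FOSat M s ψ
  | s, .or φ ψ => FOSat M s φ ∨ FOSat M s ψ
  | s, .ex x φ => ∃ a : M.Dom, FOSat M (Function.update s x a) φ
  | s, .all x φ => ∀ a : M.Dom, FOSat M (Function.update s x a) φ
  | s, .lab _ φ => FOSat M s φ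

/-! ## The evaluation games -/

/-- A position of the semantic game: the current formula, the environment
recording for each label symbol `L` the reference formula `L ψ` it currently
names, the current assignment, and the polarity (`true` = `+`). -/
structure SCLPos (V : Vocab) (D : Type u) : Type u where
  form : SCLFormula V
  env : ℕ → Option (SCLFormula V)
  asg : ℕ → D
  pol : Bool

/-- Which player moves at a given position. (At positions with at most one
successor the owner is irrelevant; we let Eloise own them.) -/
def posTurn {V : Vocab} {D : Type u} (p : SCLPos V D) : Player :=
  match p.form, p.pol with
  | .and _ _, true => .abelard
  | .and _ _, false => .eloise
  | .or _ _, true => .eloise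
  | .or _ _, false => .abelard
  | .all _ _, true => .abelard
  | .all _ _, false => .eloise
  | .ex _ _, true => .eloise
  | .ex _ _, false => .abelard
  | _, _ => .eloise

/-- Who wins a play ending at a given position: at an FO-atom position,
Eloise wins iff the atom's truth value agrees with the polarity, and Abelard
wins otherwise; plays ending anywhere else (e.g. at a claim symbol with no
reference formula, or with clock value 0) are won by neither player. -/
def posWin {V : Vocab} (M : Struct.{u} V) (p : SCLPos V M.Dom) : Player → Prop
  | .eloise => p.form.IsFOAtom ∧ (atomSat M p.asg p.form ↔ p.pol = true)
  | .abelard => p.form.IsFOAtom ∧ ¬ (atomSat M p.asg p.form ↔ p.pol = true)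

/-- Moves of the unbounded evaluation game `G_∞`. -/
inductive UStep {V : Vocab} (M : Struct.{u} V) :
    SCLPos V M.Dom → SCLPos V M.Dom → Prop
  | neg (φ : SCLFormula V) (e : ℕ → Option (SCLFormula V)) (s : ℕ → M.Dom) (b : Bool) :
      UStep M ⟨.not φ, e, s, b⟩ ⟨φ, e, s, !b⟩
  | andLeft (φ ψ : SCLFormula V) (e : ℕ → Option (SCLFormula V)) (s : ℕ → M.Dom) (b : Bool) :
      UStep M ⟨.and φ ψ, e, s, b⟩ ⟨φ, e, s, b⟩
  | andRight (φ ψ : SCLFormula V) (e : ℕ → Option (SCLFormula V)) (s : ℕ → M.Dom) (b : Bool) :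
      UStep M ⟨.and φ ψ, e, s, b⟩ ⟨ψ, e, s, b⟩
  | orLeft (φ ψ : SCLFormula V) (e : ℕ → Option (SCLFormula V)) (s : ℕ → M.Dom) (b : Bool) :
      UStep M ⟨.or φ ψ, e, s, b⟩ ⟨φ, e, s, b⟩
  | orRight (φ ψ : SCLFormula V) (e : ℕ → Option (SCLFormula V)) (s : ℕ → M.Dom) (b : Bool) :
      UStep M ⟨.or φ ψ, e, s, b⟩ ⟨ψ, e, s, b⟩
  | exStep (x : ℕ) (φ : SCLFormula V) (e : ℕ → Option (SCLFormula V)) (s : ℕ → M.Dom)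
      (b : Bool) (a : M.Dom) :
      UStep M ⟨.ex x φ, e, s, b⟩ ⟨φ, e, Function.update s x a, b⟩
  | allStep (x : ℕ) (φ : SCLFormula V) (e : ℕ → Option (SCLFormula V)) (s : ℕ → M.Dom)
      (b : Bool) (a : M.Dom) :
      UStep M ⟨.all x φ, e, s, b⟩ ⟨φ, e, Function.update s x a, b⟩
  | labStep (L : ℕ) (φ : SCLFormula V) (e : ℕ → Option (SCLFormula V)) (s : ℕ → M.Dom)
      (b : Bool) :
      UStep M ⟨.lab L φ, e, s, b⟩ ⟨φ, Function.update e L (some (.lab L φ)), s, b⟩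
  | claimStep (L : ℕ) (e : ℕ → Option (SCLFormula V)) (s : ℕ → M.Dom) (b : Bool)
      (χ : SCLFormula V) (h : e L = some χ) :
      UStep M ⟨.claim L, e, s, b⟩ ⟨χ, e, s, b⟩

/-- Moves of the `n`-bounded evaluation game: positions additionally carry a
clock value, which decreases by one exactly at jumps from a claim symbol to
its reference formula; a claim-symbol position with clock value `0` is a dead
end won by neither player. -/
inductive BStep {V : Vocab} (M : Struct.{u} V) :
    SCLPos V M.Dom × ℕ → SCLPos V M.Dom × ℕ → Prop
  | neg (φ : SCLFormula V) (e : ℕ → Option (SCLFormula V)) (s : ℕ → M.Dom) (b : Bool) (n : ℕ) :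
      BStep M (⟨.not φ, e, s, b⟩, n) (⟨φ, e, s, !b⟩, n)
  | andLeft (φ ψ : SCLFormula V) (e : ℕ → Option (SCLFormula V)) (s : ℕ → M.Dom) (b : Bool)
      (n : ℕ) : BStep M (⟨.and φ ψ, e, s, b⟩, n) (⟨φ, e, s, b⟩, n)
  | andRight (φ ψ : SCLFormula V) (e : ℕ → Option (SCLFormula V)) (s : ℕ → M.Dom) (b : Bool)
      (n : ℕ) : BStep M (⟨.and φ ψ, e, s, b⟩, n) (⟨ψ, e, s, b⟩, n)
  | orLeft (φ ψ : SCLFormula V) (e : ℕ → Option (SCLFormula V)) (s : ℕ → M.Dom) (b : Bool)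
      (n : ℕ) : BStep M (⟨.or φ ψ, e, s, b⟩, n) (⟨φ, e, s, b⟩, n)
  | orRight (φ ψ : SCLFormula V) (e : ℕ → Option (SCLFormula V)) (s : ℕ → M.Dom) (b : Bool)
      (n : ℕ) : BStep M (⟨.or φ ψ, e, s, b⟩, n) (⟨ψ, e, s, b⟩, n)
  | exStep (x : ℕ) (φ : SCLFormula V) (e : ℕ → Option (SCLFormula V)) (s : ℕ → M.Dom)
      (b : Bool) (n : ℕ) (a : M.Dom) :
      BStep M (⟨.ex x φ, e, s, b⟩, n) (⟨φ, e, Function.update s x a, b⟩, n)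
  | allStep (x : ℕ) (φ : SCLFormula V) (e : ℕ → Option (SCLFormula V)) (s : ℕ → M.Dom)
      (b : Bool) (n : ℕ) (a : M.Dom) :
      BStep M (⟨.all x φ, e, s, b⟩, n) (⟨φ, e, Function.update s x a, b⟩, n)
  | labStep (L : ℕ) (φ : SCLFormula V) (e : ℕ → Option (SCLFormula V)) (s : ℕ → M.Dom)
      (b : Bool) (n : ℕ) :
      BStep M (⟨.lab L φ, e, s, b⟩, n) (⟨φ, Function.update e L (some (.lab L φ)), s, b⟩, n)
  | claimStep (L : ℕ) (e : ℕ → Option (SCLFormula V)) (s : ℕ → M.Dom) (b : Bool)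
      (χ : SCLFormula V) (n : ℕ) (h : e L = some χ) :
      BStep M (⟨.claim L, e, s, b⟩, n + 1) (⟨χ, e, s, b⟩, n)

/-- The unbounded evaluation game `G_∞(𝔄, ·, ·)` as a game arena. -/
def gameU {V : Vocab} (M : Struct.{u} V) : GameArena (SCLPos V M.Dom) where
  turn := posTurn
  edge := UStep M
  win := posWin M

/-- The bounded evaluation games `G_n(𝔄, ·, ·)` (for all clock values `n`
simultaneously) as a game arena. -/
def gameB {V : Vocab} (M : Struct.{u} V) : GameArena (SCLPos V M.Dom × ℕ) where
  turn p := posTurn p.1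
  edge := BStep M
  win p := posWin M p.1

/-- The initial position of the evaluation game for `φ` under assignment `s`:
empty environment and positive polarity. -/
def initPos {V : Vocab} {D : Type u} (φ : SCLFormula V) (s : ℕ → D) : SCLPos V D :=
  ⟨φ, fun _ => none, s, true⟩

/-- Truth under the unbounded semantics (the logic SCL):
`𝔄,s ⊨ φ` iff Eloise has a winning strategy in `G_∞(𝔄,s,φ)`. -/
def SCLTrue {V : Vocab} (M : Struct.{u} V) (s : ℕ → M.Dom) (φ : SCLFormula V) : Prop :=
  (gameU M).HasWinningStrategy .eloise (initPos φ s)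

/-! ### The bounded game `G_ω` -/

/-- Positions of the game `G_ω`: the initial position (where Abelard picks a
number `n'`), the intermediate positions (where Eloise picks some `n ≥ n'`),
and the positions of the `n`-bounded games. -/
inductive GOPos (V : Vocab) (D : Type u) : Type u
  | start : GOPos V D
  | mid (n' : ℕ) : GOPos V D
  | inner (p : SCLPos V D) (clock : ℕ) : GOPos V D

inductive GOStep {V : Vocab} (M : Struct.{u} V) (φ : SCLFormula V) (s : ℕ → M.Dom) :
    GOPos V M.Dom → GOPos V M.Dom → Prop
  | abelardPick (n' : ℕ) : GOStep M φ s .start (.mid n')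
  | eloisePick (n' n : ℕ) (h : n' ≤ n) : GOStep M φ s (.mid n') (.inner (initPos φ s) n)
  | play (p q : SCLPos V M.Dom) (m k : ℕ) (h : BStep M (p, m) (q, k)) :
      GOStep M φ s (.inner p m) (.inner q k)

def goTurn {V : Vocab} {D : Type u} : GOPos V D → Player
  | .start => .abelard
  | .mid _ => .eloise
  | .inner p _ => posTurn p

def goWin {V : Vocab} (M : Struct.{u} V) : GOPos V M.Dom → Player → Prop
  | .inner p _, pl => posWin M p pl
  | _, _ => False

/-- The bounded evaluation game `G_ω(𝔄,s,φ)`: Abelard picks `n' ∈ ℕ`, then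
Eloise picks `n ≥ n'`, and then `G_n(𝔄,s,φ)` is played. -/
def gameOmega {V : Vocab} (M : Struct.{u} V) (φ : SCLFormula V) (s : ℕ → M.Dom) :
    GameArena (GOPos V M.Dom) where
  turn := goTurn
  edge := GOStep M φ s
  win := goWin M

/-- Truth under the bounded semantics (the logic BndSCL):
`𝔄,s ⊨_ω φ` iff Eloise has a winning strategy in `G_ω(𝔄,s,φ)`. -/
def BndTrue {V : Vocab} (M : Struct.{u} V) (s : ℕ → M.Dom) (φ : SCLFormula V) : Prop :=
  (gameOmega M φ s).HasWinningStrategy .eloise .start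

/-! ## Approximants -/

/-- Auxiliary structural recursion for approximants: `k` tells what to put in
place of a claim symbol.  Label symbols are deleted (while updating the
environment), and polarity is tracked through negations. -/
def approxCore {V : Vocab}
    (k : (ℕ → Option (SCLFormula V)) → Bool → ℕ → SCLFormula V) :
    (ℕ → Option (SCLFormula V)) → Bool → SCLFormula V → SCLFormula V
  | _, _, .bot => .bot
  | _, _, .eq x y => .eq x y
  | _, _, .rel R a => .rel R a
  | e, b, .claim L => k e b L
  | e, b, .not φ => .not (approxCore k e (!b) φ)
  | e, b, .and φ ψ => .and (approxCore k e b φ) (approxCore k e b ψ)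
  | e, b, .or φ ψ => .or (approxCore k e b φ) (approxCore k e b ψ)
  | e, b, .ex x φ => .ex x (approxCore k e b φ)
  | e, b, .all x φ => .all x (approxCore k e b φ)
  | e, b, .lab L φ => approxCore k (Function.update e L (some (.lab L φ))) b φ

/-- `approx n e b φ` unfolds each claim symbol of `φ` (in environment `e`,
under polarity `b`) through `n` jumps to reference formulas; claim symbols
reached with exhausted budget (or with no reference formula) are replaced by
`⊥` at positive occurrences and `⊤` (i.e. `¬⊥`) at negative occurrences, and
all label symbols are deleted. -/
def approx {V : Vocab} : ℕ → (ℕ → Option (SCLFormula V)) → Bool → SCLFormula V → SCLFormula V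
  | 0 => approxCore fun _ b _ => if b then .bot else .not .bot
  | n + 1 => approxCore fun e b L =>
      match e L with
      | some χ => approx n e b χ
      | none => if b then .bot else .not .bot

/-- The `n`-th approximant `Φⁿ_φ` of `φ`: the first-order formula obtained
from the `n`-th unfolding of `φ` by deleting all label symbols and replacing
positive claim occurrences by `⊥` and negative ones by `⊤`. -/
def approximant {V : Vocab} (φ : SCLFormula V) (n : ℕ) : SCLFormula V :=
  approx n (fun _ => none) true φ

/-! ## Auxiliary development for the proof -/

namespace GameArena

/-- Inductive "forced win" predicate for a player on a game arena. -/
inductive Won {P : Type u} (A : GameArena P) (pl : Player) : P → Prop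
  | deadEnd {v : P} : A.DeadEnd v → A.win v pl → Won A pl v
  | myMove {v u : P} : A.turn v = pl → A.edge v u → Won A pl u → Won A pl v
  | oppMove {v : P} : A.turn v ≠ pl → (∃ u, A.edge v u) →
      (∀ u, A.edge v u → Won A pl u) → Won A pl v

variable {P : Type u} {A : GameArena P} {pl : Player}

lemma Won.win_of_deadEnd {v : P} (h : A.Won pl v) (hd : A.DeadEnd v) : A.win v pl := by
  cases h with
  | deadEnd _ hw => exact hw
  | myMove _ he _ => exact absurd he (hd _)
  | oppMove _ he _ => exact absurd he.choose_spec (hd _)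

lemma Won.exists_move {v : P} (h : A.Won pl v) (ht : A.turn v = pl)
    (he : ∃ u, A.edge v u) : ∃ u, A.edge v u ∧ A.Won pl u := by
  cases h with
  | deadEnd hd _ => exact absurd he.choose_spec (hd _)
  | myMove _ he' hw => exact ⟨_, he', hw⟩
  | oppMove ht' _ _ => exact absurd ht ht'

lemma Won.of_move {v u : P} (h : A.Won pl v) (ht : A.turn v ≠ pl)
    (he : A.edge v u) : A.Won pl u := by
  cases h with
  | deadEnd hd _ => exact absurd he (hd _)
  | myMove ht' _ _ => exact absurd ht' ht
  | oppMove _ _ hall => exact hall _ he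

lemma won_deadEnd_iff {v : P} (hd : A.DeadEnd v) : A.Won pl v ↔ A.win v pl :=
  ⟨fun h => h.win_of_deadEnd hd, fun h => .deadEnd hd h⟩

/-- A position whose unique move is forced and belongs to `pl`. -/
lemma won_forced_iff {v u : P} (ht : A.turn v = pl) (hu : A.edge v u)
    (huniq : ∀ x, A.edge v x → x = u) : A.Won pl v ↔ A.Won pl u := by
  constructor
  · intro h
    cases h with
    | deadEnd hd _ => exact absurd hu (hd _)
    | myMove _ he hw => exact (huniq _ he) ▸ hw
    | oppMove ht' _ _ => exact absurd ht ht'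
  · exact fun h => .myMove ht hu h

lemma IsWalkFrom.ne_nil {v : P} {w : List P} (h : A.IsWalkFrom v w) : w ≠ [] := by
  intro hw; subst hw; simpa using h.1

lemma IsWalkFrom.concat {v u x : P} {w : List P} (h : A.IsWalkFrom v w)
    (hl : w.getLast? = some u) (he : A.edge u x) : A.IsWalkFrom v (w ++ [x]) := by
  refine ⟨?_, ?_⟩
  · rw [List.head?_append, h.1]; rfl
  · rw [List.Chain', List.isChain_append]
    refine ⟨h.2, List.isChain_singleton x, ?_⟩
    intro a ha b hb
    rw [hl] at ha
    cases ha
    cases hb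
    exact he

lemma isWalkFrom_concat_cases {v x : P} {w : List P} (hw : w ≠ [])
    (h : A.IsWalkFrom v (w ++ [x])) :
    A.IsWalkFrom v w ∧ ∃ u, w.getLast? = some u ∧ A.edge u x := by
  obtain ⟨hh, hc⟩ := h
  rw [List.head?_append] at hh
  rw [List.Chain', List.isChain_append] at hc
  cases hwh : w.head? with
  | none => exact absurd (List.head?_eq_none_iff.1 hwh) hw
  | some a =>
    rw [hwh] at hh
    cases hwl : w.getLast? with
    | none => exact absurd (List.getLast?_eq_none_iff.1 hwl) hw
    | some u =>
      refine ⟨⟨by rw [hwh]; exact hh, hc.1⟩, u, rfl, ?_⟩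
      exact hc.2.2 u (by rw [hwl]; rfl) x rfl

lemma FollowsFin.of_concat {σ : List P → P} {w : List P} {x : P}
    (h : A.FollowsFin pl σ (w ++ [x])) : A.FollowsFin pl σ w := by
  intro q u y hpre hql ht
  exact h q u y (hpre.trans ⟨[x], rfl⟩) hql ht

lemma FollowsFin.concat {σ : List P → P} {w : List P} {x : P}
    (h : A.FollowsFin pl σ w)
    (hx : ∀ u, w.getLast? = some u → A.turn u = pl → x = σ w) :
    A.FollowsFin pl σ (w ++ [x]) := by
  intro q u y hpre hql ht
  rcases List.prefix_concat_iff.1 hpre with heq | hpre'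
  · have h2 := List.append_inj' heq rfl
    obtain ⟨rfl, hyx⟩ := h2
    have hyx' : y = x := by simpa using hyx
    subst hyx'
    exact hx u hql ht
  · exact h q u y hpre' hql ht

lemma no_infinite_play {v : P} (hacc : Acc (fun a b => A.edge b a) v)
    {f : ℕ → P} (hf : A.IsInfPlay v f) : False := by
  have key : ∀ x : P, Acc (fun a b => A.edge b a) x → ∀ n, f n = x → False := by
    intro x hx
    induction hx with
    | intro y _ ih => exact fun n hn => ih (f (n + 1)) (hn ▸ hf.2 n) (n + 1) rfl
  exact key v hacc 0 hf.1

lemma won_of_hasWinningStrategy {v : P} (hacc : Acc (fun a b => A.edge b a) v)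
    (h : A.HasWinningStrategy pl v) : A.Won pl v := by
  obtain ⟨σ, hleg, hfin, _⟩ := h
  suffices claim : ∀ u : P, Acc (fun a b => A.edge b a) u → ∀ w, A.IsWalkFrom v w →
      w.getLast? = some u → A.FollowsFin pl σ w → A.Won pl u by
    refine claim v hacc [v] ⟨rfl, List.isChain_singleton v⟩ rfl ?_
    intro q u y hpre hql _
    have hq : q = [] := by
      rcases q with _ | ⟨a, t⟩
      · rfl
      · exfalso
        have hlen := hpre.length_le
        simp [List.length_append] at hlen
    subst hq
    simp at hql
  intro u hu
  induction hu with
  | intro u _ ih =>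
    intro w hwalk hlast hfol
    by_cases hd : A.DeadEnd u
    · obtain ⟨u', hu', hwin⟩ := hfin w ⟨hwalk, fun z hz => by
        rw [hlast] at hz; cases hz; exact hd⟩ hfol
      rw [hlast] at hu'
      cases hu'
      exact .deadEnd hd hwin
    · have hex : ∃ x, A.edge u x := by
        simp only [DeadEnd, not_forall, not_not] at hd; exact hd
      by_cases ht : A.turn u = pl
      · have hedge := hleg w u hwalk hlast ht hex
        refine .myMove ht hedge (ih _ hedge (w ++ [σ w]) (hwalk.concat hlast hedge)
          (List.getLast?_concat (l := w)) (hfol.concat fun _ _ _ => rfl))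
      · refine .oppMove ht hex fun x hx => ?_
        refine ih x hx (w ++ [x]) (hwalk.concat hlast hx) (List.getLast?_concat (l := w))
          (hfol.concat ?_)
        intro u' hl' ht'
        rw [hlast] at hl'; cases hl'
        exact absurd ht' ht

lemma hasWinningStrategy_of_won {v : P} (hacc : Acc (fun a b => A.edge b a) v)
    (hW : A.Won pl v) : A.HasWinningStrategy pl v := by
  classical
  let σ₀ : P → P := fun u =>
    if h : A.turn u = pl ∧ A.Won pl u ∧ ∃ x, A.edge u x then
      (Won.exists_move h.2.1 h.1 h.2.2).choose
    else if h2 : ∃ x, A.edge u x then h2.choose else u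
  let σ : List P → P := fun w => σ₀ ((w.getLast?).getD v)
  have hσlast : ∀ (w : List P) (u : P), w.getLast? = some u → σ w = σ₀ u := by
    intro w u hw; simp only [σ, hw, Option.getD_some]
  have hσ₀edge : ∀ u : P, (∃ x, A.edge u x) → A.edge u (σ₀ u) := by
    intro u hex
    by_cases h : A.turn u = pl ∧ A.Won pl u ∧ ∃ x, A.edge u x
    · simp only [σ₀, dif_pos h]
      exact (Won.exists_move h.2.1 h.1 h.2.2).choose_spec.1
    · simp only [σ₀, dif_neg h, dif_pos hex]
      exact hex.choose_spec
  have hσ₀won : ∀ u : P, A.turn u = pl → A.Won pl u → (∃ x, A.edge u x) →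
      A.Won pl (σ₀ u) := by
    intro u ht hw hex
    have h : A.turn u = pl ∧ A.Won pl u ∧ ∃ x, A.edge u x := ⟨ht, hw, hex⟩
    simp only [σ₀, dif_pos h]
    exact (Won.exists_move h.2.1 h.1 h.2.2).choose_spec.2
  have inv : ∀ w, A.IsWalkFrom v w → A.FollowsFin pl σ w →
      ∀ u, w.getLast? = some u → A.Won pl u := by
    intro w
    induction w using List.reverseRecOn with
    | nil => intro _ _ u h; simp at h
    | append_singleton q x ihq =>
      intro hwalk hfol u hlast
      rw [List.getLast?_concat] at hlast
      cases hlast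
      rcases eq_or_ne q [] with rfl | hq
      · have hxv : x = v := by
          have := hwalk.1; simpa using this
        subst hxv
        exact hW
      · obtain ⟨hwq, u', hl', hed⟩ := isWalkFrom_concat_cases hq hwalk
        have hWu' := ihq hwq hfol.of_concat u' hl'
        by_cases ht : A.turn u' = pl
        · have hx : x = σ q := hfol q u' x (List.prefix_refl _) hl' ht
          rw [hx, hσlast q u' hl']
          exact hσ₀won u' ht hWu' ⟨x, hed⟩
        · exact hWu'.of_move ht hed
  refine ⟨σ, ?_, ?_, ?_⟩
  · intro w u hwalk hlast ht hex
    rw [hσlast w u hlast]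
    exact hσ₀edge u hex
  · intro w hplay hfol
    cases hwl : w.getLast? with
    | none => exact absurd (List.getLast?_eq_none_iff.1 hwl) hplay.1.ne_nil
    | some u =>
      exact ⟨u, rfl, (inv w hplay.1 hfol u hwl).win_of_deadEnd (hplay.2 u hwl)⟩
  · intro f hf _
    exact no_infinite_play hacc hf

lemma hasWinningStrategy_iff_won {v : P} (hacc : Acc (fun a b => A.edge b a) v) :
    A.HasWinningStrategy pl v ↔ A.Won pl v :=
  ⟨won_of_hasWinningStrategy hacc, hasWinningStrategy_of_won hacc⟩

end GameArena

section BoundedGame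

variable {V : Vocab} (M : Struct.{u} V)

lemma bstep_lex {p q : SCLPos V M.Dom × ℕ} (h : BStep M p q) :
    Prod.Lex (· < ·) (· < ·) (q.2, sizeOf q.1.form) (p.2, sizeOf p.1.form) := by
  cases h <;>
    first
      | exact Prod.Lex.left _ _ (Nat.lt_succ_self _)
      | exact Prod.Lex.right _ (by simp <;> omega)

lemma bstep_acc (p : SCLPos V M.Dom × ℕ) :
    Acc (fun q p : SCLPos V M.Dom × ℕ => BStep M p q) p := by
  have hwf : WellFounded (fun q p : SCLPos V M.Dom × ℕ => BStep M p q) := by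
    refine Subrelation.wf (r := InvImage (Prod.Lex (· < ·) (· < ·))
      (fun p : SCLPos V M.Dom × ℕ => (p.2, sizeOf p.1.form))) ?_ ?_
    · intro q p h
      exact bstep_lex M h
    · exact InvImage.wf _ ((Nat.lt_wfRel.wf).prod_lex (Nat.lt_wfRel.wf))
  exact hwf.apply p

variable {e : ℕ → Option (SCLFormula V)} {s : ℕ → M.Dom} {b : Bool} {n : ℕ}

lemma wonB_atom {φ : SCLFormula V} (ha : φ.IsFOAtom)
    (hne : ∀ q, ¬ BStep M ((⟨φ, e, s, b⟩ : SCLPos V M.Dom), n) q) :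
    (gameB M).Won .eloise (⟨φ, e, s, b⟩, n) ↔ (atomSat M s φ ↔ b = true) := by
  have hd : (gameB M).DeadEnd ((⟨φ, e, s, b⟩ : SCLPos V M.Dom), n) := hne
  rw [GameArena.won_deadEnd_iff hd]
  exact ⟨fun h => h.2, fun h => ⟨ha, h⟩⟩

lemma wonB_claim_zero {L : ℕ} :
    ¬ (gameB M).Won .eloise (⟨.claim L, e, s, b⟩, 0) := by
  intro h
  have hd : (gameB M).DeadEnd ((⟨.claim L, e, s, b⟩ : SCLPos V M.Dom), 0) :=
    fun q hq => nomatch hq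
  exact (h.win_of_deadEnd hd).1

lemma wonB_claim_none {L : ℕ} (he : e L = none) :
    ¬ (gameB M).Won .eloise (⟨.claim L, e, s, b⟩, n) := by
  intro h
  have hd : (gameB M).DeadEnd ((⟨.claim L, e, s, b⟩ : SCLPos V M.Dom), n) := by
    intro q hq
    cases hq with
    | claimStep L e s b χ n h' => rw [he] at h'; cases h'
  exact (h.win_of_deadEnd hd).1

lemma wonB_claim_some {L : ℕ} {χ : SCLFormula V} (he : e L = some χ) :
    (gameB M).Won .eloise (⟨.claim L, e, s, b⟩, n + 1) ↔
      (gameB M).Won .eloise (⟨χ, e, s, b⟩, n) := by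
  refine GameArena.won_forced_iff rfl (BStep.claimStep L e s b χ n he) ?_
  intro x hx
  cases hx with
  | claimStep L e s b χ' n h' => rw [he] at h'; cases h'; rfl

lemma wonB_not {φ : SCLFormula V} :
    (gameB M).Won .eloise (⟨.not φ, e, s, b⟩, n) ↔
      (gameB M).Won .eloise (⟨φ, e, s, !b⟩, n) := by
  refine GameArena.won_forced_iff (by cases b <;> rfl) (BStep.neg φ e s b n) ?_
  intro x hx
  cases hx; rfl

lemma wonB_lab {L : ℕ} {φ : SCLFormula V} :
    (gameB M).Won .eloise (⟨.lab L φ, e, s, b⟩, n) ↔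
      (gameB M).Won .eloise (⟨φ, Function.update e L (some (.lab L φ)), s, b⟩, n) := by
  refine GameArena.won_forced_iff (by cases b <;> rfl) (BStep.labStep L φ e s b n) ?_
  intro x hx
  cases hx; rfl

lemma wonB_and_true {φ ψ : SCLFormula V} :
    (gameB M).Won .eloise (⟨.and φ ψ, e, s, true⟩, n) ↔
      (gameB M).Won .eloise (⟨φ, e, s, true⟩, n) ∧
      (gameB M).Won .eloise (⟨ψ, e, s, true⟩, n) := by
  constructor
  · intro h
    have ht : (gameB M).turn ((⟨.and φ ψ, e, s, true⟩ : SCLPos V M.Dom), n) ≠ .eloise :=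
      fun hh => Player.noConfusion hh
    exact ⟨h.of_move ht (BStep.andLeft φ ψ e s true n),
      h.of_move ht (BStep.andRight φ ψ e s true n)⟩
  · rintro ⟨h1, h2⟩
    refine GameArena.Won.oppMove (fun hh => Player.noConfusion hh)
      ⟨_, BStep.andLeft φ ψ e s true n⟩ ?_
    intro u hu
    cases hu <;> assumption

lemma wonB_and_false {φ ψ : SCLFormula V} :
    (gameB M).Won .eloise (⟨.and φ ψ, e, s, false⟩, n) ↔
      (gameB M).Won .eloise (⟨φ, e, s, false⟩, n) ∨
      (gameB M).Won .eloise (⟨ψ, e, s, false⟩, n) := by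
  constructor
  · intro h
    cases h with
    | deadEnd hd _ => exact absurd (BStep.andLeft φ ψ e s false n) (hd _)
    | myMove _ he hw =>
        cases he with
        | andLeft => exact Or.inl hw
        | andRight => exact Or.inr hw
    | oppMove ht _ _ => exact absurd rfl ht
  · rintro (h | h)
    · exact .myMove rfl (BStep.andLeft φ ψ e s false n) h
    · exact .myMove rfl (BStep.andRight φ ψ e s false n) h

lemma wonB_or_false {φ ψ : SCLFormula V} :
    (gameB M).Won .eloise (⟨.or φ ψ, e, s, false⟩, n) ↔
      (gameB M).Won .eloise (⟨φ, e, s, false⟩, n) ∧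
      (gameB M).Won .eloise (⟨ψ, e, s, false⟩, n) := by
  constructor
  · intro h
    have ht : (gameB M).turn ((⟨.or φ ψ, e, s, false⟩ : SCLPos V M.Dom), n) ≠ .eloise :=
      fun hh => Player.noConfusion hh
    exact ⟨h.of_move ht (BStep.orLeft φ ψ e s false n),
      h.of_move ht (BStep.orRight φ ψ e s false n)⟩
  · rintro ⟨h1, h2⟩
    refine GameArena.Won.oppMove (fun hh => Player.noConfusion hh)
      ⟨_, BStep.orLeft φ ψ e s false n⟩ ?_
    intro u hu
    cases hu <;> assumption

lemma wonB_or_true {φ ψ : SCLFormula V} :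
    (gameB M).Won .eloise (⟨.or φ ψ, e, s, true⟩, n) ↔
      (gameB M).Won .eloise (⟨φ, e, s, true⟩, n) ∨
      (gameB M).Won .eloise (⟨ψ, e, s, true⟩, n) := by
  constructor
  · intro h
    cases h with
    | deadEnd hd _ => exact absurd (BStep.orLeft φ ψ e s true n) (hd _)
    | myMove _ he hw =>
        cases he with
        | orLeft => exact Or.inl hw
        | orRight => exact Or.inr hw
    | oppMove ht _ _ => exact absurd rfl ht
  · rintro (h | h)
    · exact .myMove rfl (BStep.orLeft φ ψ e s true n) h
    · exact .myMove rfl (BStep.orRight φ ψ e s true n) h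

lemma wonB_ex_true {x : ℕ} {φ : SCLFormula V} :
    (gameB M).Won .eloise (⟨.ex x φ, e, s, true⟩, n) ↔
      ∃ a : M.Dom, (gameB M).Won .eloise (⟨φ, e, Function.update s x a, true⟩, n) := by
  constructor
  · intro h
    cases h with
    | deadEnd hd _ =>
        exact absurd (BStep.exStep x φ e s true n (Classical.choice M.dom_nonempty)) (hd _)
    | myMove _ he hw =>
        cases he with
        | exStep _ _ _ _ _ _ a => exact ⟨a, hw⟩
    | oppMove ht _ _ => exact absurd rfl ht
  · rintro ⟨a, h⟩
    exact .myMove rfl (BStep.exStep x φ e s true n a) h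

lemma wonB_ex_false {x : ℕ} {φ : SCLFormula V} :
    (gameB M).Won .eloise (⟨.ex x φ, e, s, false⟩, n) ↔
      ∀ a : M.Dom, (gameB M).Won .eloise (⟨φ, e, Function.update s x a, false⟩, n) := by
  constructor
  · intro h a
    exact h.of_move (fun hh => Player.noConfusion hh) (BStep.exStep x φ e s false n a)
  · intro h
    refine GameArena.Won.oppMove (fun hh => Player.noConfusion hh)
      ⟨_, BStep.exStep x φ e s false n (Classical.choice M.dom_nonempty)⟩ ?_
    intro u hu
    cases hu with
    | exStep _ _ _ _ _ _ a => exact h a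

lemma wonB_all_false {x : ℕ} {φ : SCLFormula V} :
    (gameB M).Won .eloise (⟨.all x φ, e, s, false⟩, n) ↔
      ∃ a : M.Dom, (gameB M).Won .eloise (⟨φ, e, Function.update s x a, false⟩, n) := by
  constructor
  · intro h
    cases h with
    | deadEnd hd _ =>
        exact absurd (BStep.allStep x φ e s false n (Classical.choice M.dom_nonempty)) (hd _)
    | myMove _ he hw =>
        cases he with
        | allStep _ _ _ _ _ _ a => exact ⟨a, hw⟩
    | oppMove ht _ _ => exact absurd rfl ht
  · rintro ⟨a, h⟩
    exact .myMove rfl (BStep.allStep x φ e s false n a) h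

lemma wonB_all_true {x : ℕ} {φ : SCLFormula V} :
    (gameB M).Won .eloise (⟨.all x φ, e, s, true⟩, n) ↔
      ∀ a : M.Dom, (gameB M).Won .eloise (⟨φ, e, Function.update s x a, true⟩, n) := by
  constructor
  · intro h a
    exact h.of_move (fun hh => Player.noConfusion hh) (BStep.allStep x φ e s true n a)
  · intro h
    refine GameArena.Won.oppMove (fun hh => Player.noConfusion hh)
      ⟨_, BStep.allStep x φ e s true n (Classical.choice M.dom_nonempty)⟩ ?_
    intro u hu
    cases hu with
    | allStep _ _ _ _ _ _ a => exact h a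

lemma fosat_approxCore (k : (ℕ → Option (SCLFormula V)) → Bool → ℕ → SCLFormula V)
    (n : ℕ)
    (hk : ∀ e (s : ℕ → M.Dom) b L, FOSat M s (k e b L) ↔
      ((gameB M).Won .eloise (⟨.claim L, e, s, b⟩, n) ↔ b = true)) :
    ∀ (φ : SCLFormula V) e (s : ℕ → M.Dom) (b : Bool),
      FOSat M s (approxCore k e b φ) ↔
        ((gameB M).Won .eloise (⟨φ, e, s, b⟩, n) ↔ b = true) := by
  intro φ
  induction φ with
  | bot =>
    intro e s b
    rw [show approxCore k e b .bot = .bot from rfl,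
      wonB_atom M (φ := SCLFormula.bot) (e := e) (s := s) (b := b) (n := n) trivial
        (fun q hq => nomatch hq)]
    cases b <;> simp [FOSat, atomSat]
  | eq x y =>
    intro e s b
    rw [show approxCore k e b (.eq x y) = .eq x y from rfl,
      wonB_atom M (φ := SCLFormula.eq x y) (e := e) (s := s) (b := b) (n := n) trivial
        (fun q hq => nomatch hq)]
    cases b <;> simp [FOSat, atomSat] <;> tauto
  | rel R a =>
    intro e s b
    rw [show approxCore k e b (.rel R a) = .rel R a from rfl,
      wonB_atom M (φ := SCLFormula.rel R a) (e := e) (s := s) (b := b) (n := n) trivial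
        (fun q hq => nomatch hq)]
    cases b <;> simp [FOSat, atomSat] <;> tauto
  | claim L => exact fun e s b => hk e s b L
  | not φ ih =>
    intro e s b
    rw [show approxCore k e b (.not φ) = .not (approxCore k e (!b) φ) from rfl]
    rw [show FOSat M s (.not (approxCore k e (!b) φ)) =
      ¬ FOSat M s (approxCore k e (!b) φ) from rfl]
    rw [ih e s (!b), wonB_not M]
    cases b <;> simp
  | and φ ψ ihφ ihψ =>
    intro e s b
    rw [show approxCore k e b (.and φ ψ) =
      .and (approxCore k e b φ) (approxCore k e b ψ) from rfl]
    rw [show FOSat M s (.and (approxCore k e b φ) (approxCore k e b ψ)) =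
      (FOSat M s (approxCore k e b φ) ∧ FOSat M s (approxCore k e b ψ)) from rfl]
    rw [ihφ e s b, ihψ e s b]
    cases b
    · rw [wonB_and_false M]; simp <;> tauto
    · rw [wonB_and_true M]; simp <;> tauto
  | or φ ψ ihφ ihψ =>
    intro e s b
    rw [show approxCore k e b (.or φ ψ) =
      .or (approxCore k e b φ) (approxCore k e b ψ) from rfl]
    rw [show FOSat M s (.or (approxCore k e b φ) (approxCore k e b ψ)) =
      (FOSat M s (approxCore k e b φ) ∨ FOSat M s (approxCore k e b ψ)) from rfl]
    rw [ihφ e s b, ihψ e s b]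
    cases b
    · rw [wonB_or_false M]; simp <;> tauto
    · rw [wonB_or_true M]; simp <;> tauto
  | ex x φ ih =>
    intro e s b
    rw [show approxCore k e b (.ex x φ) = .ex x (approxCore k e b φ) from rfl]
    rw [show FOSat M s (.ex x (approxCore k e b φ)) =
      (∃ a : M.Dom, FOSat M (Function.update s x a) (approxCore k e b φ)) from rfl]
    cases b
    · rw [wonB_ex_false M]
      simp only [ih]
      simp [not_forall]
    · rw [wonB_ex_true M]
      simp only [ih]
      simp
  | all x φ ih =>
    intro e s b
    rw [show approxCore k e b (.all x φ) = .all x (approxCore k e b φ) from rfl]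
    rw [show FOSat M s (.all x (approxCore k e b φ)) =
      (∀ a : M.Dom, FOSat M (Function.update s x a) (approxCore k e b φ)) from rfl]
    cases b
    · rw [wonB_all_false M]
      simp only [ih]
      simp [not_exists]
    · rw [wonB_all_true M]
      simp only [ih]
      simp
  | lab L φ ih =>
    intro e s b
    rw [show approxCore k e b (.lab L φ) =
      approxCore k (Function.update e L (some (.lab L φ))) b φ from rfl]
    rw [wonB_lab M, ih]

lemma fosat_approx (n : ℕ) :
    ∀ (φ : SCLFormula V) e (s : ℕ → M.Dom) (b : Bool),
      FOSat M s (approx n e b φ) ↔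
        ((gameB M).Won .eloise (⟨φ, e, s, b⟩, n) ↔ b = true) := by
  induction n with
  | zero =>
    refine fosat_approxCore M _ 0 ?_
    intro e s b L
    have hW := wonB_claim_zero M (e := e) (s := s) (b := b) (L := L)
    cases b <;> simp [FOSat, hW]
  | succ n ihn =>
    refine fosat_approxCore M _ (n + 1) ?_
    intro e s b L
    cases he : e L with
    | none =>
      have hW := wonB_claim_none M (s := s) (b := b) (n := n + 1) he
      simp only [he]
      cases b <;> simp [FOSat, hW]
    | some χ =>
      simp only [he]
      rw [wonB_claim_some M he]
      exact ihn χ e s b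

lemma fosat_approxCore_mono
    (k k' : (ℕ → Option (SCLFormula V)) → Bool → ℕ → SCLFormula V)
    (hk : ∀ e (s : ℕ → M.Dom) L,
      (FOSat M s (k e true L) → FOSat M s (k' e true L)) ∧
      (FOSat M s (k' e false L) → FOSat M s (k e false L))) :
    ∀ (φ : SCLFormula V) e (s : ℕ → M.Dom),
      (FOSat M s (approxCore k e true φ) → FOSat M s (approxCore k' e true φ)) ∧
      (FOSat M s (approxCore k' e false φ) → FOSat M s (approxCore k e false φ)) := by
  intro φ
  induction φ with
  | bot => exact fun e s => ⟨id, id⟩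
  | eq x y => exact fun e s => ⟨id, id⟩
  | rel R a => exact fun e s => ⟨id, id⟩
  | claim L => exact fun e s => hk e s L
  | not φ ih =>
    intro e s
    exact ⟨fun h hh => h ((ih e s).2 hh), fun h hh => h ((ih e s).1 hh)⟩
  | and φ ψ ihφ ihψ =>
    intro e s
    exact ⟨fun h => ⟨(ihφ e s).1 h.1, (ihψ e s).1 h.2⟩,
      fun h => ⟨(ihφ e s).2 h.1, (ihψ e s).2 h.2⟩⟩
  | or φ ψ ihφ ihψ =>
    intro e s
    exact ⟨fun h => h.elim (fun h => Or.inl ((ihφ e s).1 h))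
        (fun h => Or.inr ((ihψ e s).1 h)),
      fun h => h.elim (fun h => Or.inl ((ihφ e s).2 h))
        (fun h => Or.inr ((ihψ e s).2 h))⟩
  | ex x φ ih =>
    intro e s
    exact ⟨fun h => h.elim fun a ha => ⟨a, (ih e _).1 ha⟩,
      fun h => h.elim fun a ha => ⟨a, (ih e _).2 ha⟩⟩
  | all x φ ih =>
    intro e s
    exact ⟨fun h a => (ih e _).1 (h a), fun h a => (ih e _).2 (h a)⟩
  | lab L φ ih => exact fun e s => ih _ s

lemma fosat_approx_mono : ∀ n m : ℕ, n ≤ m → ∀ (φ : SCLFormula V) e (s : ℕ → M.Dom),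
    (FOSat M s (approx n e true φ) → FOSat M s (approx m e true φ)) ∧
    (FOSat M s (approx m e false φ) → FOSat M s (approx n e false φ)) := by
  intro n
  induction n with
  | zero =>
    intro m _
    cases m with
    | zero => exact fun φ e s => ⟨id, id⟩
    | succ m =>
      refine fosat_approxCore_mono M _ _ ?_
      intro e s L
      exact ⟨fun h => h.elim, fun _ h => h⟩
  | succ n ihn =>
    intro m hm
    cases m with
    | zero => omega
    | succ m =>
      have hm' : n ≤ m := Nat.succ_le_succ_iff.1 hm
      refine fosat_approxCore_mono M _ _ ?_
      intro e s L
      cases he : e L with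
      | none =>
        constructor <;> · simp only [he]; exact fun h => h
      | some χ =>
        simp only [he]
        exact ihn m hm' χ e s

end BoundedGame

section OmegaGame

variable {V : Vocab} (M : Struct.{u} V) (φ : SCLFormula V) (s : ℕ → M.Dom)

lemma go_acc_inner (p : SCLPos V M.Dom) (n : ℕ) :
    Acc (fun a b => GOStep M φ s b a) (GOPos.inner p n) := by
  have key : ∀ x : SCLPos V M.Dom × ℕ,
      Acc (fun q p : SCLPos V M.Dom × ℕ => BStep M p q) x →
      Acc (fun a b => GOStep M φ s b a) (GOPos.inner x.1 x.2) := by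
    intro x hx
    induction hx with
    | intro x _ ih =>
      constructor
      intro y hy
      cases hy with
      | play p q m k h => exact ih (q, k) h
  exact key (p, n) (bstep_acc M (p, n))

lemma go_acc_start : Acc (fun a b => GOStep M φ s b a) GOPos.start := by
  constructor
  intro y hy
  cases hy with
  | abelardPick n' =>
    constructor
    intro z hz
    cases hz with
    | eloisePick n' n h => exact go_acc_inner M φ s _ n

lemma wonB_to_wonO : ∀ x : SCLPos V M.Dom × ℕ,
    (gameB M).Won .eloise x →
    (gameOmega M φ s).Won .eloise (GOPos.inner x.1 x.2) := by
  intro x h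
  induction h with
  | @deadEnd v hd hw =>
    refine GameArena.Won.deadEnd ?_ hw
    intro y hy
    cases hy with
    | play p q m k h => exact hd (q, k) h
  | @myMove v u ht he _ ihw =>
    exact GameArena.Won.myMove ht (GOStep.play v.1 u.1 v.2 u.2 he) ihw
  | @oppMove v ht hex hall ih =>
    refine GameArena.Won.oppMove ht ⟨.inner hex.choose.1 hex.choose.2,
      GOStep.play v.1 hex.choose.1 v.2 hex.choose.2 hex.choose_spec⟩ ?_
    intro y hy
    cases hy with
    | play p q m k h => exact ih (q, k) h

lemma wonO_to_wonB : ∀ v : GOPos V M.Dom,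
    (gameOmega M φ s).Won .eloise v →
    ∀ (p : SCLPos V M.Dom) (n : ℕ), v = .inner p n → (gameB M).Won .eloise (p, n) := by
  intro v h
  induction h with
  | @deadEnd v hd hw =>
    rintro p n rfl
    refine GameArena.Won.deadEnd ?_ hw
    intro q hq
    exact hd (.inner q.1 q.2) (GOStep.play p q.1 n q.2 hq)
  | @myMove v u ht he _ ihw =>
    rintro p n rfl
    cases he with
    | play p q m k h => exact GameArena.Won.myMove ht h (ihw q k rfl)
  | @oppMove v ht hex hall ih =>
    rintro p n rfl
    obtain ⟨u, hu⟩ := hex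
    cases hu with
    | play p q m k h =>
      refine GameArena.Won.oppMove ht ⟨(q, k), h⟩ ?_
      intro z hz
      exact ih (.inner z.1 z.2) (GOStep.play p z.1 n z.2 hz) z.1 z.2 rfl

lemma wonO_inner_iff (p : SCLPos V M.Dom) (n : ℕ) :
    (gameOmega M φ s).Won .eloise (.inner p n) ↔ (gameB M).Won .eloise (p, n) :=
  ⟨fun h => wonO_to_wonB M φ s _ h p n rfl, fun h => wonB_to_wonO M φ s (p, n) h⟩

lemma wonO_mid_iff (n' : ℕ) :
    (gameOmega M φ s).Won .eloise (.mid n') ↔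
      ∃ n, n' ≤ n ∧ (gameB M).Won .eloise (initPos φ s, n) := by
  constructor
  · intro h
    cases h with
    | deadEnd hd _ => exact absurd (GOStep.eloisePick n' n' le_rfl) (hd _)
    | myMove _ he hw =>
      cases he with
      | eloisePick n' n hn => exact ⟨n, hn, (wonO_inner_iff M φ s _ n).1 hw⟩
    | oppMove ht _ _ => exact absurd rfl ht
  · rintro ⟨n, hn, h⟩
    exact GameArena.Won.myMove rfl (GOStep.eloisePick n' n hn)
      ((wonO_inner_iff M φ s _ n).2 h)

lemma wonO_start_iff :
    (gameOmega M φ s).Won .eloise .start ↔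
      ∀ n', ∃ n, n' ≤ n ∧ (gameB M).Won .eloise (initPos φ s, n) := by
  constructor
  · intro h n'
    have := h.of_move (fun hh => Player.noConfusion hh) (GOStep.abelardPick n')
    exact (wonO_mid_iff M φ s n').1 this
  · intro h
    refine GameArena.Won.oppMove (fun hh => Player.noConfusion hh)
      ⟨_, GOStep.abelardPick 0⟩ ?_
    intro u hu
    cases hu with
    | abelardPick n' => exact (wonO_mid_iff M φ s n').2 (h n')

end OmegaGame

/-- `𝔄,s ⊨_ω φ` iff `𝔄,s ⊨ Φⁿ_φ` (in first-order logic)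
for some `n ∈ ℕ`; i.e. `φ` is weakly equivalent to the countable disjunction
`⋁_{n∈ℕ} Φⁿ_φ` of its approximants. -/
theorem bounded_truth_iff_some_approximant {V : Vocab} (φ : SCLFormula V)
    (M : Struct.{u} V) (s : ℕ → M.Dom) :
    BndTrue M s φ ↔ ∃ n : ℕ, FOSat M s (approximant φ n) := by
  have hacc := go_acc_start M φ s
  rw [show BndTrue M s φ = (gameOmega M φ s).HasWinningStrategy .eloise .start from rfl,
    GameArena.hasWinningStrategy_iff_won hacc, wonO_start_iff M φ s]
  constructor
  · intro h
    obtain ⟨n, _, hW⟩ := h 0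
    refine ⟨n, ?_⟩
    rw [approximant, fosat_approx M n φ _ s true]
    simpa [initPos] using hW
  · rintro ⟨n, hF⟩ n'
    refine ⟨max n n', le_max_right _ _, ?_⟩
    have hF' : FOSat M s (approx (max n n') (fun _ => none) true φ) :=
      (fosat_approx_mono M n (max n n') (le_max_left _ _) φ _ s).1 hF
    have hW := (fosat_approx M (max n n') φ _ s true).1 hF'
    simpa [initPos] using hW
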